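/- Let f : [a,b] → ℝ be continuously differentiable with f' Φ'-superadditive, where Φ : [0,b-a] → ℝ≥0 is continuously differentiable, Φ' ≥ 0, Φ(0) = 0. Let a₁,...,aₙ be real numbers satisfying the Jensen–Steffensen conditions 0 ≤ ∑_{i=1}^j aᵢ ≤ ∑_{i=1}^n aᵢ for all j and Aₙ = ∑_{i=1}^n aᵢ > 0, and let x₁ ≤ x₂ ≤ ... ≤ xₙ be points in [a,b]. Set x̄ = (1/Aₙ)∑ aᵢxᵢ. Then for every c ∈ [a,b]: f(c) + f'(c)(x̄ - c) + (1/Aₙ)∑_{i=1}^n aᵢ Φ(|xᵢ - c|) ≤ (1/Aₙ)∑_{i=1}^n aᵢ f(xᵢ). -/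

import Mathlib

/-- Jensen–Steffensen type inequality for functions with
Φ'-superadditive derivative. -/
theorem stmt2 (a b : ℝ) (hab : a < b) (f f' Φ Φ' : ℝ → ℝ)
    (hf : ∀ x ∈ Set.Icc a b, HasDerivAt f (f' x) x)
    (hf'c : ContinuousOn f' (Set.Icc a b))
    (hΦ : ∀ x ∈ Set.Icc 0 (b - a), HasDerivAt Φ (Φ' x) x)
    (hΦ'c : ContinuousOn Φ' (Set.Icc 0 (b - a)))
    (hΦnn : ∀ x ∈ Set.Icc 0 (b - a), 0 ≤ Φ x)
    (hΦ'nn : ∀ x ∈ Set.Icc 0 (b - a), 0 ≤ Φ' x)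
    (hΦ0 : Φ 0 = 0)
    (hsup : ∀ x y, a ≤ x → x ≤ y → y ≤ b → Φ' (y - x) ≤ f' y - f' x)
    (n : ℕ) (hn : 0 < n) (w x : ℕ → ℝ) (A xbar : ℝ)
    (hA : A = ∑ i ∈ Finset.range n, w i) (hApos : 0 < A)
    (hJS : ∀ j ≤ n, 0 ≤ ∑ i ∈ Finset.range j, w i ∧ ∑ i ∈ Finset.range j, w i ≤ A)
    (hx : ∀ i < n, x i ∈ Set.Icc a b)
    (hmono : ∀ i j, i ≤ j → j < n → x i ≤ x j)
    (hxbar : xbar = (1 / A) * ∑ i ∈ Finset.range n, w i * x i) :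
    ∀ c ∈ Set.Icc a b,
      f c + f' c * (xbar - c) + (1 / A) * ∑ i ∈ Finset.range n, w i * Φ |x i - c| ≤
        (1 / A) * ∑ i ∈ Finset.range n, w i * f (x i) := by
  intro c hc
  obtain ⟨hac, hcb⟩ := hc
  set g : ℝ → ℝ := fun t => f t - f c - f' c * (t - c) - Φ |t - c| with hg
  -- continuity of f and Φ
  have hfcont : ContinuousOn f (Set.Icc a b) := fun t ht =>
    (hf t ht).continuousAt.continuousWithinAt
  have hΦcont : ContinuousOn Φ (Set.Icc 0 (b - a)) := fun t ht =>
    (hΦ t ht).continuousAt.continuousWithinAt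
  have hgc : g c = 0 := by simp [hg, hΦ0]
  have hmaps1 : ∀ t ∈ Set.Icc c b, t - c ∈ Set.Icc 0 (b - a) := by
    intro t ht
    exact ⟨by linarith [ht.1], by linarith [ht.2]⟩
  have hmaps2 : ∀ t ∈ Set.Icc a c, c - t ∈ Set.Icc 0 (b - a) := by
    intro t ht
    exact ⟨by linarith [ht.2], by linarith [ht.1]⟩
  -- monotone on [c,b]
  have ginc : MonotoneOn g (Set.Icc c b) := by
    have hd : ∀ t ∈ Set.Ioo c b,
        HasDerivAt (fun t => f t - f c - f' c * (t - c) - Φ (t - c))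
          (f' t - f' c - Φ' (t - c)) t := by
      intro t ht
      have h1 : HasDerivAt f (f' t) t := hf t ⟨hac.trans ht.1.le, ht.2.le⟩
      have h2 : HasDerivAt (fun t : ℝ => f' c * (t - c)) (f' c * 1) t :=
        ((hasDerivAt_id t).sub_const c).const_mul (f' c)
      have h3' : HasDerivAt (fun t : ℝ => t - c) 1 t := (hasDerivAt_id t).sub_const c
      have h3 : HasDerivAt (fun t : ℝ => Φ (t - c)) (Φ' (t - c) * 1) t :=
        (hΦ (t - c) (hmaps1 t ⟨ht.1.le, ht.2.le⟩)).comp t h3'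
      have := ((h1.sub_const (f c)).sub h2).sub h3
      simp only [mul_one] at this
      exact this
    have key : MonotoneOn (fun t => f t - f c - f' c * (t - c) - Φ (t - c)) (Set.Icc c b) := by
      apply monotoneOn_of_deriv_nonneg (convex_Icc c b)
      · have c1 : ContinuousOn f (Set.Icc c b) :=
          hfcont.mono (Set.Icc_subset_Icc hac le_rfl)
        have c2 : ContinuousOn (fun t : ℝ => Φ (t - c)) (Set.Icc c b) :=
          hΦcont.comp ((continuous_id.sub continuous_const).continuousOn) hmaps1
        exact ((c1.sub continuousOn_const).sub
          (continuousOn_const.mul ((continuousOn_id).sub continuousOn_const))).sub c2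
      · intro t ht
        rw [interior_Icc] at ht
        exact (hd t ht).differentiableAt.differentiableWithinAt
      · intro t ht
        rw [interior_Icc] at ht
        rw [(hd t ht).deriv]
        have := hsup c t hac ht.1.le ht.2.le
        linarith
    intro u hu v hv huv
    have e1 : g u = f u - f c - f' c * (u - c) - Φ (u - c) := by
      simp [hg, abs_of_nonneg (sub_nonneg.2 hu.1)]
    have e2 : g v = f v - f c - f' c * (v - c) - Φ (v - c) := by
      simp [hg, abs_of_nonneg (sub_nonneg.2 hv.1)]
    rw [e1, e2]
    exact key hu hv huv
  -- antitone on [a,c]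
  have gdec : AntitoneOn g (Set.Icc a c) := by
    have hd : ∀ t ∈ Set.Ioo a c,
        HasDerivAt (fun t => f t - f c - f' c * (t - c) - Φ (c - t))
          (f' t - f' c + Φ' (c - t)) t := by
      intro t ht
      have h1 : HasDerivAt f (f' t) t := hf t ⟨ht.1.le, ht.2.le.trans hcb⟩
      have h2 : HasDerivAt (fun t : ℝ => f' c * (t - c)) (f' c * 1) t :=
        ((hasDerivAt_id t).sub_const c).const_mul (f' c)
      have h3' : HasDerivAt (fun t : ℝ => c - t) (-1) t := by
        simpa using (hasDerivAt_id t).const_sub c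
      have h3 : HasDerivAt (fun t : ℝ => Φ (c - t)) (Φ' (c - t) * (-1)) t :=
        (hΦ (c - t) (hmaps2 t ⟨ht.1.le, ht.2.le⟩)).comp t h3'
      have := ((h1.sub_const (f c)).sub h2).sub h3
      have e : f' t - f' c * 1 - Φ' (c - t) * (-1) = f' t - f' c + Φ' (c - t) := by ring
      rw [e] at this
      exact this
    have key : AntitoneOn (fun t => f t - f c - f' c * (t - c) - Φ (c - t)) (Set.Icc a c) := by
      apply antitoneOn_of_deriv_nonpos (convex_Icc a c)
      · have c1 : ContinuousOn f (Set.Icc a c) :=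
          hfcont.mono (Set.Icc_subset_Icc le_rfl hcb)
        have c2 : ContinuousOn (fun t : ℝ => Φ (c - t)) (Set.Icc a c) :=
          hΦcont.comp ((continuous_const.sub continuous_id).continuousOn) hmaps2
        exact ((c1.sub continuousOn_const).sub
          (continuousOn_const.mul ((continuousOn_id).sub continuousOn_const))).sub c2
      · intro t ht
        rw [interior_Icc] at ht
        exact (hd t ht).differentiableAt.differentiableWithinAt
      · intro t ht
        rw [interior_Icc] at ht
        rw [(hd t ht).deriv]
        have := hsup t c ht.1.le ht.2.le hcb
        linarith
    intro u hu v hv huv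
    have e1 : g u = f u - f c - f' c * (u - c) - Φ (c - u) := by
      simp [hg, abs_sub_comm, abs_of_nonneg (sub_nonneg.2 hu.2)]
    have e2 : g v = f v - f c - f' c * (v - c) - Φ (c - v) := by
      simp [hg, abs_sub_comm, abs_of_nonneg (sub_nonneg.2 hv.2)]
    rw [e1, e2]
    exact key hu hv huv
  -- discrete setup
  set S : ℕ → ℝ := fun j => ∑ i ∈ Finset.range j, w i with hS
  have hS0 : ∀ j ≤ n, 0 ≤ S j := fun j hj => (hJS j hj).1
  have hSA : ∀ j ≤ n, S j ≤ A := fun j hj => (hJS j hj).2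
  set G : ℕ → ℝ := fun i => g (x i) with hG
  set H : ℕ → ℝ := fun i => g (max (x i) c) with hH
  have hxa : ∀ i < n, a ≤ x i := fun i hi => (hx i hi).1
  have hxb : ∀ i < n, x i ≤ b := fun i hi => (hx i hi).2
  have hmaxmem : ∀ i < n, max (x i) c ∈ Set.Icc c b := fun i hi =>
    ⟨le_max_right _ _, max_le (hxb i hi) hcb⟩
  have hH0 : ∀ i < n, 0 ≤ H i := by
    intro i hi
    have := ginc (Set.left_mem_Icc.2 hcb) (hmaxmem i hi) (le_max_right _ _)
    rw [hgc] at this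
    exact this
  have hGH : ∀ i < n, H i ≤ G i := by
    intro i hi
    rcases le_or_gt (x i) c with h | h
    · have hm : max (x i) c = c := max_eq_right h
      have : g c ≤ g (x i) := gdec ⟨hxa i hi, h⟩ (Set.right_mem_Icc.2 hac) h
      simp only [hH, hG, hm, hgc]
      rw [hgc] at this
      linarith [this]
    · simp [hH, hG, max_eq_left h.le]
  have hHmono : ∀ i j, i ≤ j → j < n → H i ≤ H j := fun i j hij hj =>
    ginc (hmaxmem i (lt_of_le_of_lt hij hj)) (hmaxmem j hj)
      (max_le_max (hmono i j hij hj) le_rfl)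
  -- key termwise inequality
  have key : ∀ i, i + 1 < n → (G (i + 1) - G i) * S (i + 1) ≤ (H (i + 1) - H i) * A := by
    intro i hi1
    have hi : i < n := Nat.lt_of_succ_lt hi1
    have hS1 : 0 ≤ S (i + 1) := hS0 _ hi1.le
    have hS2 : S (i + 1) ≤ A := hSA _ hi1.le
    rcases le_or_gt (x (i + 1)) c with h | h
    · have hxi : x i ≤ x (i + 1) := hmono i (i + 1) (Nat.le_succ i) hi1
      have hGd : G (i + 1) ≤ G i :=
        gdec ⟨hxa i hi, hxi.trans h⟩ ⟨hxa _ hi1, h⟩ hxi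
      have hH1 : H i = 0 := by
        simp only [hH, max_eq_right (hxi.trans h), hgc]
      have hH2 : H (i + 1) = 0 := by
        simp only [hH, max_eq_right h, hgc]
      rw [hH1, hH2]
      nlinarith
    · have hHe : H (i + 1) = G (i + 1) := by simp [hH, hG, max_eq_left h.le]
      have h1 := hGH i hi
      have h2 := hH0 i hi
      have h3 := hHmono i (i + 1) (Nat.le_succ i) hi1
      nlinarith [mul_nonneg (sub_nonneg.2 h1) hS1,
        mul_nonneg (sub_nonneg.2 h3) (sub_nonneg.2 hS2)]
  -- Abel summation
  have abel : ∑ i ∈ Finset.range n, w i * G i =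
      G (n - 1) * A - ∑ i ∈ Finset.range (n - 1), (G (i + 1) - G i) * S (i + 1) := by
    have h := Finset.sum_range_by_parts (fun i => G i) w n
    simp only [smul_eq_mul] at h
    rw [hA]
    calc ∑ i ∈ Finset.range n, w i * G i = ∑ i ∈ Finset.range n, G i * w i := by
          exact Finset.sum_congr rfl fun i _ => mul_comm _ _
      _ = _ := h
  have sum_bound : ∑ i ∈ Finset.range (n - 1), (G (i + 1) - G i) * S (i + 1) ≤
      ∑ i ∈ Finset.range (n - 1), (H (i + 1) - H i) * A := by
    apply Finset.sum_le_sum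
    intro i hi
    have := Finset.mem_range.1 hi
    exact key i (by omega)
  have tele : ∑ i ∈ Finset.range (n - 1), (H (i + 1) - H i) * A = (H (n - 1) - H 0) * A := by
    rw [← Finset.sum_mul, Finset.sum_range_sub (fun i => H i)]
  have hmain : 0 ≤ ∑ i ∈ Finset.range n, w i * G i := by
    rw [abel]
    have h1 : H (n - 1) ≤ G (n - 1) := hGH _ (by omega)
    have h2 : 0 ≤ H 0 := hH0 0 hn
    have p1 : 0 ≤ (G (n - 1) - H (n - 1)) * A :=
      mul_nonneg (sub_nonneg.2 h1) hApos.le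
    have p2 : 0 ≤ H 0 * A := mul_nonneg h2 hApos.le
    nlinarith [sum_bound, tele]
  -- expand the sum
  have expand : ∑ i ∈ Finset.range n, w i * G i =
      (∑ i ∈ Finset.range n, w i * f (x i)) - A * f c
        - f' c * ((∑ i ∈ Finset.range n, w i * x i) - A * c)
        - ∑ i ∈ Finset.range n, w i * Φ |x i - c| := by
    have : ∀ i ∈ Finset.range n, w i * G i =
        w i * f (x i) - w i * f c - f' c * (w i * x i) + f' c * c * w i
          - w i * Φ |x i - c| := by
      intro i _
      simp only [hG, hg]
      ring
    rw [Finset.sum_congr rfl this]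
    simp only [Finset.sum_sub_distrib, Finset.sum_add_distrib]
    rw [← Finset.sum_mul, ← Finset.mul_sum, ← Finset.mul_sum, ← hA]
    ring
  have hA' : A ≠ 0 := ne_of_gt hApos
  have hAx : A * xbar = ∑ i ∈ Finset.range n, w i * x i := by
    rw [hxbar]; field_simp
  have final : (1 / A) * (∑ i ∈ Finset.range n, w i * G i) =
      (1 / A) * (∑ i ∈ Finset.range n, w i * f (x i)) - f c - f' c * (xbar - c)
        - (1 / A) * (∑ i ∈ Finset.range n, w i * Φ |x i - c|) := by
    rw [expand, ← hAx]
    field_simp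
  have hnn : 0 ≤ (1 / A) * (∑ i ∈ Finset.range n, w i * G i) :=
    mul_nonneg (by positivity) hmain
  linarith [final, hnn]
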